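/- Let X be a real-valued random variable with mean μ and finite variance σ², and suppose μ > y_max. Let N = K·m with K, m positive integers, and let X_K be a sum of m i.i.d. random variables each distributed as X/N. Suppose x satisfies 0 ≤ x ≤ y_max/K and the symmetric equilibrium first-order condition p(K·x) + p'(K·x)·x − P(X_K ≤ x) = 0. Then y_max − K·x ≤ (−p'(y_max))·y_max² / (K·p(0)) + σ²·K / ((−p'(0))·N·(μ − y_max)²); in particular, the efficiency ratio satisfies K·x / y_max ≥ 1 − O(1/K) − O(K/N). -/

import Mathlib

open MeasureTheory ProbabilityTheory

theorem iid_coalition_efficiency_bound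
    {Ω : Type*} [MeasurableSpace Ω] (P : Measure Ω) [IsProbabilityMeasure P]
    (p p' : ℝ → ℝ)
    (hp_anti : StrictAntiOn p (Set.Ici (0 : ℝ)))
    (hp_conc : ConcaveOn ℝ (Set.Ici (0 : ℝ)) p)
    (hp_deriv : ∀ y ∈ Set.Ici (0 : ℝ), HasDerivAt p (p' y) y)
    (hp0 : 0 < p 0) (hp'0 : p' 0 < 0)
    (hp_bot : Filter.Tendsto p Filter.atTop Filter.atBot)
    (ymax : ℝ) (hymax_pos : 0 < ymax) (hymax : p ymax = 0)
    (X : Ω → ℝ) (hX_meas : Measurable X) (hX_L2 : MemLp X 2 P)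
    (μ σ : ℝ) (hmean : ∫ ω, X ω ∂P = μ) (hvar : ∫ ω, (X ω - μ) ^ 2 ∂P = σ ^ 2)
    (hμ : ymax < μ)
    (K m : ℕ) (hK : 1 ≤ K) (hm : 1 ≤ m)
    (N : ℕ) (hN : N = K * m)
    (Xs : Fin m → Ω → ℝ) (hXs_meas : ∀ i, Measurable (Xs i))
    (hXs_indep : iIndepFun Xs P)
    (hXs_law : ∀ i, P.map (Xs i) = P.map (fun ω => X ω / N))
    (x : ℝ) (hx_nonneg : 0 ≤ x) (hx_le : x ≤ ymax / K)
    (hx_FOC : p (K * x) + p' (K * x) * x -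
        (P {ω | ∑ i, Xs i ω ≤ x}).toReal = 0) :
    ymax - K * x ≤
        (-p' ymax) * ymax ^ 2 / (K * p 0) +
          σ ^ 2 * K / ((-p' 0) * N * (μ - ymax) ^ 2) ∧
      K * x / ymax ≥ 1 -
        ((-p' ymax) * ymax ^ 2 / (K * p 0) +
          σ ^ 2 * K / ((-p' 0) * N * (μ - ymax) ^ 2)) / ymax := by
  -- basic numeric facts
  have hKpos : (0:ℝ) < K := by exact_mod_cast hK
  have hmpos : (0:ℝ) < m := by exact_mod_cast hm
  have hNpos' : 1 ≤ N := by
    rw [hN]; exact Nat.one_le_iff_ne_zero.mpr (Nat.mul_ne_zero (by omega) (by omega))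
  have hNpos : (0:ℝ) < N := by exact_mod_cast hNpos'
  have hNr : (N:ℝ) = (K:ℝ) * (m:ℝ) := by exact_mod_cast congrArg (Nat.cast : ℕ → ℝ) hN
  have hμy : 0 < μ - ymax := sub_pos.mpr hμ
  have hσ2 : 0 ≤ σ ^ 2 := by
    rw [← hvar]; exact integral_nonneg fun ω => sq_nonneg _
  -- the function X/N
  set Y : Ω → ℝ := fun ω => X ω / N with hYdef
  have hY_meas : Measurable Y := hX_meas.div_const _
  have hY_L2 : MemLp Y 2 P := by
    have := hX_L2.const_mul ((N:ℝ))⁻¹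
    simpa [hYdef, div_eq_mul_inv, mul_comm] using this
  -- MemLp of each Xs i
  have hMi : ∀ i, MemLp (Xs i) 2 P := by
    intro i
    have h1 : MemLp (id : ℝ → ℝ) 2 (P.map Y) :=
      (memLp_map_measure_iff aestronglyMeasurable_id hY_meas.aemeasurable).mpr hY_L2
    rw [← hXs_law i] at h1
    exact (memLp_map_measure_iff aestronglyMeasurable_id (hXs_meas i).aemeasurable).mp h1
  -- transfer of moments
  have hmap_int : ∀ (f : ℝ → ℝ), Measurable f → ∀ i,
      ∫ ω, f (Xs i ω) ∂P = ∫ ω, f (X ω / N) ∂P := by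
    intro f hf i
    rw [← integral_map (hXs_meas i).aemeasurable hf.aestronglyMeasurable, hXs_law i,
      integral_map hY_meas.aemeasurable hf.aestronglyMeasurable]
  have hX1 : Integrable X P := hX_L2.integrable one_le_two
  have hX2 : Integrable (fun ω => X ω ^ 2) P := hX_L2.integrable_sq
  have hEX2 : ∫ ω, X ω ^ 2 ∂P = σ ^ 2 + μ ^ 2 := by
    have hfun : (fun ω => (X ω - μ) ^ 2) = fun ω => X ω ^ 2 - 2 * μ * X ω + μ ^ 2 := by
      funext ω; ring
    rw [hfun] at hvar
    have hint2 : Integrable (fun ω => X ω ^ 2 - 2 * μ * X ω) P := by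
      have := hX2.sub (hX1.const_mul (2 * μ))
      simpa [Pi.sub_def] using this
    rw [integral_add hint2 (integrable_const _),
      integral_sub hX2 (hX1.const_mul _), integral_const_mul, hmean,
      integral_const] at hvar
    simp only [measure_univ, probReal_univ, ENNReal.toReal_one, smul_eq_mul, one_mul] at hvar
    linarith
  have hEi : ∀ i, ∫ ω, Xs i ω ∂P = μ / N := by
    intro i
    have := hmap_int (fun t => t) measurable_id i
    rw [this, integral_div, hmean]
  have hE2i : ∀ i, ∫ ω, Xs i ω ^ 2 ∂P = (σ ^ 2 + μ ^ 2) / (N:ℝ) ^ 2 := by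
    intro i
    have := hmap_int (fun t => t ^ 2) (measurable_id.pow_const 2) i
    rw [this]
    have : (fun ω => (X ω / N) ^ 2) = fun ω => ((N:ℝ) ^ 2)⁻¹ * X ω ^ 2 := by
      funext ω; ring
    rw [this, integral_const_mul, hEX2, inv_mul_eq_div]
  -- variance of each Xs i
  have hVi : ∀ i, variance (Xs i) P = σ ^ 2 / (N:ℝ) ^ 2 := by
    intro i
    rw [variance_eq_sub (hMi i)]
    have h2 : (P[(Xs i) ^ 2] : ℝ) = ∫ ω, Xs i ω ^ 2 ∂P := by
      congr 1
    rw [h2, hE2i i, hEi i, div_pow]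
    ring
  -- the sum
  set S : Ω → ℝ := fun ω => ∑ i, Xs i ω with hSdef
  have hS_eq : S = ∑ i, Xs i := by funext ω; simp [hSdef]
  have hMS : MemLp S 2 P := by
    rw [hS_eq]; exact memLp_finset_sum' _ fun i _ => hMi i
  have hES : ∫ ω, S ω ∂P = μ / K := by
    simp only [hSdef]
    rw [integral_finset_sum _ fun i _ => (hMi i).integrable one_le_two]
    simp only [hEi, Finset.sum_const, Finset.card_univ, Fintype.card_fin, nsmul_eq_mul]
    rw [hNr]
    field_simp
  have hVS : variance S P = σ ^ 2 / ((K:ℝ) * N) := by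
    rw [hS_eq, IndepFun.variance_sum (fun i _ => hMi i)
      (fun i _ j _ hij => hXs_indep.indepFun hij)]
    simp only [hVi, Finset.sum_const, Finset.card_univ, Fintype.card_fin, nsmul_eq_mul]
    rw [hNr]
    field_simp
  -- Chebyshev
  set c : ℝ := (μ - ymax) / K with hcdef
  have hc : 0 < c := div_pos hμy hKpos
  have hcheb := meas_ge_le_variance_div_sq (μ := P) hMS hc
  have hsub : {ω | S ω ≤ x} ⊆ {ω | c ≤ |S ω - ∫ ω, S ω ∂P|} := by
    intro ω hω
    simp only [Set.mem_setOf_eq] at hω ⊢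
    rw [hES]
    have h1 : S ω ≤ ymax / K := le_trans hω hx_le
    have h2 : S ω - μ / K ≤ -c := by
      rw [hcdef, sub_div]; linarith
    rw [le_abs]
    right
    linarith
  have hPle : P {ω | S ω ≤ x} ≤ ENNReal.ofReal (variance S P / c ^ 2) :=
    le_trans (measure_mono hsub) hcheb
  have hT_le : (P {ω | S ω ≤ x}).toReal ≤ σ ^ 2 * K / ((N:ℝ) * (μ - ymax) ^ 2) := by
    have h1 : (P {ω | S ω ≤ x}).toReal ≤ variance S P / c ^ 2 := by
      refine le_trans (ENNReal.toReal_mono ENNReal.ofReal_ne_top hPle) ?_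
      rw [ENNReal.toReal_ofReal (div_nonneg (variance_nonneg _ _) (sq_nonneg _))]
    refine le_trans h1 (le_of_eq ?_)
    rw [hVS, hcdef, div_pow, div_div_div_eq]
    rw [div_eq_div_iff (by positivity) (by positivity)]
    ring
  -- analysis part
  have h0mem : (0:ℝ) ∈ Set.Ici (0:ℝ) := Set.self_mem_Ici
  have hymem : ymax ∈ Set.Ici (0:ℝ) := le_of_lt hymax_pos
  have hy0 : (0:ℝ) ≤ (K:ℝ) * x := mul_nonneg hKpos.le hx_nonneg
  have hymem' : (K:ℝ) * x ∈ Set.Ici (0:ℝ) := hy0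
  have hyle : (K:ℝ) * x ≤ ymax := by
    have := (le_div_iff₀ hKpos).mp hx_le
    linarith
  -- p' is antitone on Ici 0
  have hanti : AntitoneOn p' (Set.Ici (0:ℝ)) := by
    have h := hp_conc.antitoneOn_deriv fun y hy => (hp_deriv y hy).differentiableAt
    intro a ha b hb hab
    have := h ha hb hab
    rwa [(hp_deriv a ha).deriv, (hp_deriv b hb).deriv] at this
  have hp'ym : p' ymax ≤ p' 0 := hanti h0mem hymem hymax_pos.le
  set c0 : ℝ := -p' 0 with hc0def
  have hc0 : 0 < c0 := by rw [hc0def]; linarith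
  -- tangent inequality at 0 : c0 * ymax ≤ p 0
  have htang : c0 * ymax ≤ p 0 := by
    have hs := hp_conc.slope_le_of_hasDerivAt h0mem hymem hymax_pos (hp_deriv 0 h0mem)
    rw [slope_def_field, hymax] at hs
    have h5 : (0 - p 0) / (ymax - 0) ≤ p' 0 := hs
    rw [div_le_iff₀ (by linarith), sub_zero, zero_sub] at h5
    have hnm : c0 * ymax = -(p' 0 * ymax) := by rw [hc0def]; ring
    linarith
  -- chord bound : p 0 * (ymax - K x) / ymax ≤ p (K x)
  have hchord : (ymax - (K:ℝ) * x) / ymax * p 0 ≤ p ((K:ℝ) * x) := by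
    have ha : 0 ≤ (ymax - (K:ℝ) * x) / ymax := div_nonneg (by linarith) hymax_pos.le
    have hb : 0 ≤ ((K:ℝ) * x) / ymax := div_nonneg hy0 hymax_pos.le
    have hab : (ymax - (K:ℝ) * x) / ymax + ((K:ℝ) * x) / ymax = 1 := by
      field_simp
      ring
    have hcc := hp_conc.2 h0mem hymem ha hb hab
    have hbm : ((K:ℝ) * x) / ymax * ymax = (K:ℝ) * x :=
      div_mul_cancel₀ _ hymax_pos.ne'
    simpa [smul_eq_mul, hymax, hbm] using hcc
  -- bound on the penalty term
  have hp'Kx : p' ymax ≤ p' ((K:ℝ) * x) := hanti hymem' hymem hyle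
  have hp'Kx0 : p' ((K:ℝ) * x) ≤ p' 0 := hanti h0mem hymem' hy0
  have hA0 : 0 < -p' ymax := by linarith
  have hB : -(p' ((K:ℝ) * x) * x) ≤ (-p' ymax) * ymax / K := by
    have h1 : -(p' ((K:ℝ) * x) * x) = (-p' ((K:ℝ) * x)) * x := by ring
    rw [h1]
    calc (-p' ((K:ℝ) * x)) * x ≤ (-p' ymax) * x := by
          apply mul_le_mul_of_nonneg_right (by linarith) hx_nonneg
      _ ≤ (-p' ymax) * (ymax / K) := by
          apply mul_le_mul_of_nonneg_left hx_le hA0.le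
      _ = (-p' ymax) * ymax / K := by ring
  -- combine via the FOC
  have hFOC' : p ((K:ℝ) * x) = (P {ω | S ω ≤ x}).toReal - p' ((K:ℝ) * x) * x := by
    have h6 : p (↑K * x) + p' (↑K * x) * x - (P {ω | ∑ i, Xs i ω ≤ x}).toReal = 0 := hx_FOC
    simp only [hSdef]
    linarith
  set Bv : ℝ := σ ^ 2 * K / ((N:ℝ) * (μ - ymax) ^ 2) with hBvdef
  have hBv0 : 0 ≤ Bv := by positivity
  have hK0 : (K:ℝ) ≠ 0 := hKpos.ne'
  have hp00 : p 0 ≠ 0 := hp0.ne'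
  have hmain : (ymax - (K:ℝ) * x) / ymax * p 0 ≤ Bv + (-p' ymax) * ymax / K := by
    have h7 := hchord
    rw [hFOC'] at h7
    linarith
  have h1 : ymax - (K:ℝ) * x ≤ (Bv + (-p' ymax) * ymax / K) * ymax / p 0 := by
    rw [le_div_iff₀ hp0]
    have h8 := mul_le_mul_of_nonneg_right hmain hymax_pos.le
    have h9 : (ymax - (K:ℝ) * x) / ymax * p 0 * ymax = (ymax - (K:ℝ) * x) * p 0 := by
      field_simp
    linarith
  have h2 : (Bv + (-p' ymax) * ymax / K) * ymax / p 0
      = Bv * ymax / p 0 + (-p' ymax) * ymax ^ 2 / ((K:ℝ) * p 0) := by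
    field_simp
  have h3 : Bv * ymax / p 0 ≤ Bv / c0 := by
    rw [div_le_div_iff₀ hp0 hc0]
    calc Bv * ymax * c0 = Bv * (c0 * ymax) := by ring
      _ ≤ Bv * p 0 := mul_le_mul_of_nonneg_left htang hBv0
  have h4 : Bv / c0 = σ ^ 2 * K / ((-p' 0) * N * (μ - ymax) ^ 2) := by
    rw [hBvdef, div_div, ← hc0def]
    congr 1
    ring
  have hfirst : ymax - (K:ℝ) * x ≤
      (-p' ymax) * ymax ^ 2 / ((K:ℝ) * p 0) +
        σ ^ 2 * K / ((-p' 0) * N * (μ - ymax) ^ 2) := by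
    rw [← h4]
    linarith
  refine ⟨hfirst, ?_⟩
  set R : ℝ := (-p' ymax) * ymax ^ 2 / ((K:ℝ) * p 0) +
      σ ^ 2 * K / ((-p' 0) * N * (μ - ymax) ^ 2) with hRdef
  have hdiv : (ymax - R) / ymax ≤ ((K:ℝ) * x) / ymax :=
    (div_le_div_iff_of_pos_right hymax_pos).mpr (by linarith)
  rw [ge_iff_le]
  have heq : 1 - R / ymax = (ymax - R) / ymax := by
    field_simp
  rw [heq]
  exact hdiv
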